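/- Closed form of the average-case cost recurrence of SQ-DB-SKY: Let m ≥ 2 be an integer and define a : ℕ → ℚ by a 0 = 1 and, for every s ≥ 1, a s = 1 + (m / s) · Σ_{i=0}^{s−1} a i. Then for every s ≥ 0, a s = 1 + (m / (m − 1)) · (C(m + s − 1, s) − 1), where C(n, k) denotes the binomial coefficient. -/

import Mathlib

lemma hockey_stick (r : ℕ) : ∀ s : ℕ,
    ∑ i ∈ Finset.range (s+1), (r+i).choose i = (r+s+1).choose s := by
  intro s
  induction s with
  | zero => simp
  | succ t ih =>
    rw [Finset.sum_range_succ, ih]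
    have h : r + (t+1) = r + t + 1 := by ring
    rw [h]
    exact (Nat.choose_succ_succ _ _).symm

/-- Closed form of the average-case cost recurrence of SQ-DB-SKY:
if `a 0 = 1` and `a s = 1 + (m/s) * ∑_{i<s} a i` for `s ≥ 1`, then
`a s = 1 + (m/(m-1)) * (C(m+s-1, s) - 1)`. -/
theorem sq_avg_cost_closed_form (m : ℕ) (hm : 2 ≤ m) (a : ℕ → ℚ)
    (h0 : a 0 = 1)
    (hrec : ∀ s : ℕ, 1 ≤ s → a s = 1 + ((m : ℚ) / (s : ℚ)) * ∑ i ∈ Finset.range s, a i) :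
    ∀ s : ℕ, a s = 1 + ((m : ℚ) / ((m : ℚ) - 1)) * (((m + s - 1).choose s : ℚ) - 1) := by
  obtain ⟨k, rfl⟩ : ∃ k, m = k + 2 := ⟨m - 2, by omega⟩
  intro s
  induction s using Nat.strong_induction_on with
  | _ s ih =>
    match s with
    | 0 => simp [h0]
    | t + 1 =>
      rw [hrec (t+1) (by omega)]
      have hsum : ∑ i ∈ Finset.range (t+1), a i
          = ∑ i ∈ Finset.range (t+1),
              (1 + (((k:ℚ)+2) / (((k:ℚ)+2) - 1)) * (((k+1+i).choose i : ℚ) - 1)) := by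
        apply Finset.sum_congr rfl
        intro i hi
        have := ih i (Finset.mem_range.mp hi)
        rw [this]
        have : k + 2 + i - 1 = k + 1 + i := by omega
        rw [this]
        push_cast
        ring
      rw [hsum]
      have hhs : ∑ i ∈ Finset.range (t+1), ((k+1+i).choose i : ℚ)
          = ((k+t+2).choose t : ℚ) := by
        have := hockey_stick (k+1) t
        have h2 : k + 1 + t + 1 = k + t + 2 := by omega
        rw [h2] at this
        exact_mod_cast congrArg (Nat.cast : ℕ → ℚ) this
      have hratio : ((k:ℚ)+2) * ((k+t+2).choose t : ℚ)
          = ((t:ℚ)+1) * ((k+t+2).choose (t+1) : ℚ) := by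
        have := Nat.choose_succ_right_eq (k+t+2) t
        have h2 : k + t + 2 - t = k + 2 := by omega
        rw [h2] at this
        have : ((k+t+2).choose (t+1) : ℚ) * ((t:ℚ)+1)
            = ((k+t+2).choose t : ℚ) * ((k:ℚ)+2) := by exact_mod_cast this
        linarith
      have htgt : k + 2 + (t+1) - 1 = k + t + 2 := by omega
      rw [htgt]
      rw [Finset.sum_add_distrib, Finset.sum_const, Finset.card_range, ← Finset.mul_sum,
        Finset.sum_sub_distrib, Finset.sum_const, Finset.card_range, hhs]
      have hk1 : ((k:ℚ)+2) - 1 ≠ 0 := by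
        have := Nat.cast_nonneg (α := ℚ) k
        intro h; linarith
      simp only [nsmul_eq_mul, mul_one]
      push_cast
      push_cast at hratio
      generalize hB1 : (((k+t+2).choose t : ℕ) : ℚ) = B1 at hratio ⊢
      generalize hB2 : (((k+t+2).choose (t+1) : ℕ) : ℚ) = B2 at hratio ⊢
      have ht1 : ((t:ℚ)+1) ≠ 0 := by positivity
      field_simp
      linear_combination ((k:ℚ)+2) * hratio
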